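/- Assume ε ∈ {1,−1}, ξ ∉ {0, 1/6}, εξ(1−6ξ) > 0, z is twice differentiable at λ* with z′(λ*) ≠ 0, z(λ*)² = 1/(6εξ(1−6ξ)), (1−6ξ)(2ξλ*z(λ*) + 1 + w_m) ≠ 0, 2ξ(1−3w_m)/((1−6ξ)(2ξλ*z(λ*) + 1 + w_m)) > 0, and y* = √(2ξ(1−3w_m)/((1−6ξ)(2ξλ*z(λ*) + 1 + w_m))). Let J be the 3×3 Jacobian matrix of the vector field F at the point P₂ᵦ = (0, y*, λ*). Then J is nilpotent with J³ = 0; in particular all three eigenvalues of J vanish and the slow-roll inflation point is degenerate. -/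

import Mathlib

open Polynomial Filter

/-- The factor `D(λ) = 1 − 6εξ(1−6ξ)z(λ)²` coming from the time reparametrization. -/
noncomputable def Dfun (ε ξ : ℝ) (z : ℝ → ℝ) (l : ℝ) : ℝ :=
  1 - 6*ε*ξ*(1-6*ξ)*(z l)^2

/-- The common bracket
`B(x,y,λ) = −4/3 − 2ξλy²z(λ) + ε(1−6ξ)(1−w_m)x² + 2εξ(1−3w_m)(x+z(λ))² + (1+w_m)(1−y²)`. -/
noncomputable def Bfun (ε ξ wm : ℝ) (z : ℝ → ℝ) (x y l : ℝ) : ℝ :=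
  -4/3 - 2*ξ*l*y^2*(z l) + ε*(1-6*ξ)*(1-wm)*x^2
    + 2*ε*ξ*(1-3*wm)*(x + z l)^2 + (1+wm)*(1-y^2)

/-- First component of the vector field:
`f₁ = −(x − (ε/2)λy²)·D(λ) + (3/2)(x + 6ξz(λ))·B(x,y,λ)`. -/
noncomputable def f1 (ε ξ wm : ℝ) (z : ℝ → ℝ) (x y l : ℝ) : ℝ :=
  -(x - ε/2*l*y^2) * Dfun ε ξ z l + 3/2*(x + 6*ξ*(z l)) * Bfun ε ξ wm z x y l

/-- Second component: `f₂ = y(2 − (1/2)λx)·D(λ) + (3/2)y·B(x,y,λ)`. -/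
noncomputable def f2 (ε ξ wm : ℝ) (z : ℝ → ℝ) (x y l : ℝ) : ℝ :=
  y*(2 - 1/2*l*x) * Dfun ε ξ z l + 3/2*y * Bfun ε ξ wm z x y l

/-- Third component: `f₃ = x·D(λ)/z′(λ)`. -/
noncomputable def f3 (ε ξ : ℝ) (z : ℝ → ℝ) (x y l : ℝ) : ℝ :=
  x * Dfun ε ξ z l / deriv z l

/-- The full vector field `F(x,y,λ) = (f₁,f₂,f₃)` of the reduced cosmological system. -/
noncomputable def Fvec (ε ξ wm : ℝ) (z : ℝ → ℝ) (x y l : ℝ) : ℝ × ℝ × ℝ :=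
  (f1 ε ξ wm z x y l, f2 ε ξ wm z x y l, f3 ε ξ z x y l)

/-- The effective equation-of-state parameter `w_eff(x,y,λ)`. -/
noncomputable def weff (ε ξ wm : ℝ) (z : ℝ → ℝ) (x y l : ℝ) : ℝ :=
  (Dfun ε ξ z l)⁻¹ *
    (-1 + ε*(1-6*ξ)*(1-wm)*x^2 + 2*ε*ξ*(1-3*wm)*(x + z l)^2
      + (1+wm)*(1-y^2) - 2*ε*ξ*(1-6*ξ)*(z l)^2 - 2*ξ*l*y^2*(z l))

/-- The Jacobian matrix `J_{ij} = ∂f_i/∂(j-th variable)` of `F` at the point `(x,y,λ)`. -/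
noncomputable def Jmat (ε ξ wm : ℝ) (z : ℝ → ℝ) (x y l : ℝ) :
    Matrix (Fin 3) (Fin 3) ℝ :=
  Matrix.of
    ![![deriv (fun t => f1 ε ξ wm z t y l) x,
        deriv (fun t => f1 ε ξ wm z x t l) y,
        deriv (fun t => f1 ε ξ wm z x y t) l],
      ![deriv (fun t => f2 ε ξ wm z t y l) x,
        deriv (fun t => f2 ε ξ wm z x t l) y,
        deriv (fun t => f2 ε ξ wm z x y t) l],
      ![deriv (fun t => f3 ε ξ z t y l) x,
        deriv (fun t => f3 ε ξ z x t l) y,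
        deriv (fun t => f3 ε ξ z x y t) l]]

lemma deriv_cubic (a0 a1 a2 a3 x : ℝ) :
    deriv (fun t => a0 + a1*t + a2*t^2 + a3*t^3) x = a1 + 2*a2*x + 3*a3*x^2 := by
  have h1 : HasDerivAt (fun t : ℝ => a1*t) (a1*1) x := (hasDerivAt_id x).const_mul a1
  have h2 : HasDerivAt (fun t : ℝ => a2*t^2) (a2*((2:ℕ)*x^1)) x :=
    (hasDerivAt_pow 2 x).const_mul a2
  have h3 : HasDerivAt (fun t : ℝ => a3*t^3) (a3*((3:ℕ)*x^2)) x :=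
    (hasDerivAt_pow 3 x).const_mul a3
  have H : HasDerivAt (fun t : ℝ => a0 + a1*t + a2*t^2 + a3*t^3)
      (a1*1 + a2*((2:ℕ)*x^1) + a3*((3:ℕ)*x^2)) x := ((h1.const_add a0).add h2).add h3
  rw [H.deriv]; push_cast; ring

lemma nilp3 (a b c d e' : ℝ) (h : a*a + b*d = 0) :
    (Matrix.of ![![a,b,c],![d,-a,e'],![(0:ℝ),0,0]])^3 = 0 ∧
    (Matrix.of ![![a,b,c],![d,-a,e'],![(0:ℝ),0,0]]).charpoly = X^3 := by
  constructor
  · ext i j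
    fin_cases i <;> fin_cases j <;>
      simp [pow_succ, Matrix.mul_apply, Fin.sum_univ_three] <;>
      first
        | linear_combination a*h | linear_combination b*h | linear_combination c*h
        | linear_combination d*h | linear_combination (-a)*h | linear_combination e'*h
  · have hC : (C a * C a : ℝ[X]) + C b * C d = 0 := by
      rw [← C_mul, ← C_mul, ← C_add, h, map_zero]
    rw [Matrix.charpoly, Matrix.det_fin_three]
    simp [Matrix.charmatrix_apply, Matrix.one_apply]
    linear_combination (-(X:ℝ[X])) * hC


/-- At the slow-roll inflation point `P₂ᵦ = (0, y*, λ*)`,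
`y* = √(2ξ(1−3w_m)/((1−6ξ)(2ξλ*z(λ*)+1+w_m)))`, the Jacobian is nilpotent of order 3
(`J³ = 0`); in particular all its eigenvalues vanish (`charpoly = X³`) and the point
is degenerate. -/
theorem slowRoll_point_nilpotent (ε ξ wm : ℝ) (z : ℝ → ℝ) (lstar : ℝ)
    (hε : ε = 1 ∨ ε = -1) (hξ0 : ξ ≠ 0) (hξ6 : ξ ≠ 1/6)
    (hsign : 0 < ε*ξ*(1-6*ξ))
    (hz1 : ∀ᶠ t in nhds lstar, DifferentiableAt ℝ z t)
    (hz2 : DifferentiableAt ℝ (deriv z) lstar) (hz' : deriv z lstar ≠ 0)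
    (hl : (z lstar)^2 = 1/(6*ε*ξ*(1-6*ξ)))
    (hden : (1-6*ξ)*(2*ξ*lstar*(z lstar) + 1 + wm) ≠ 0)
    (hpos : 0 < 2*ξ*(1-3*wm)/((1-6*ξ)*(2*ξ*lstar*(z lstar) + 1 + wm))) :
    (Jmat ε ξ wm z 0
        (Real.sqrt (2*ξ*(1-3*wm)/((1-6*ξ)*(2*ξ*lstar*(z lstar) + 1 + wm)))) lstar)^3
      = 0 ∧
    (Jmat ε ξ wm z 0
        (Real.sqrt (2*ξ*(1-3*wm)/((1-6*ξ)*(2*ξ*lstar*(z lstar) + 1 + wm)))) lstar).charpoly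
      = X^3 := by
  obtain ⟨h16, hS⟩ := mul_ne_zero_iff.mp hden
  set Y := Real.sqrt (2*ξ*(1-3*wm)/((1-6*ξ)*(2*ξ*lstar*(z lstar) + 1 + wm))) with hYdef
  have hne : (6*ε*ξ*(1-6*ξ)) ≠ 0 := by nlinarith [hsign]
  have hZ : 6*ε*ξ*(1-6*ξ)*(z lstar)^2 = 1 := by
    rw [hl]; field_simp
    exact div_self (by rintro rfl; simp at hsign)
  have hq : Y^2 = 2*ξ*(1-3*wm)/((1-6*ξ)*(2*ξ*lstar*(z lstar) + 1 + wm)) :=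
    Real.sq_sqrt hpos.le
  have hy' : Y^2*((1-6*ξ)*(2*ξ*lstar*(z lstar) + 1 + wm)) = 2*ξ*(1-3*wm) := by
    rw [hq]; field_simp
    have h16' : (1 - ξ*6) ≠ 0 := by contrapose! h16; linarith
    rw [mul_div_assoc, div_self h16', mul_one]
  have hD : (1 - 6*ε*ξ*(1-6*ξ)*(z lstar)^2) = 0 := by linear_combination -hZ
  have hB0 : (-4/3 - 2*ξ*lstar*Y^2*(z lstar) + 2*ε*ξ*(1-3*wm)*(z lstar)^2
      + (1+wm)*(1-Y^2)) = 0 := by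
    have h3 : (1-6*ξ) * (3 * (-4/3 - 2*ξ*lstar*Y^2*(z lstar)
        + 2*ε*ξ*(1-3*wm)*(z lstar)^2 + (1+wm)*(1-Y^2))) = 0 := by
      linear_combination (1-3*wm)*hZ - 3*hy'
    have := (mul_eq_zero.mp h3).resolve_left h16
    linarith
  have e00 : deriv (fun t => f1 ε ξ wm z t Y lstar) 0
      = 36*ε*ξ^2*(1-3*wm)*(z lstar)^2 := by
    have hfun : (fun t => f1 ε ξ wm z t Y lstar)
        = (fun t => (ε/2*lstar*Y^2*(1 - 6*ε*ξ*(1-6*ξ)*(z lstar)^2)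
              + 9*ξ*(z lstar)*(-4/3 - 2*ξ*lstar*Y^2*(z lstar)
                + 2*ε*ξ*(1-3*wm)*(z lstar)^2 + (1+wm)*(1-Y^2)))
            + (-(1 - 6*ε*ξ*(1-6*ξ)*(z lstar)^2)
              + 3/2*(-4/3 - 2*ξ*lstar*Y^2*(z lstar) + 2*ε*ξ*(1-3*wm)*(z lstar)^2
                + (1+wm)*(1-Y^2)) + 9*ξ*(z lstar)*(4*ε*ξ*(1-3*wm)*(z lstar)))*t
            + (3/2*(4*ε*ξ*(1-3*wm)*(z lstar))
              + 9*ξ*(z lstar)*(ε*(1-6*ξ)*(1-wm) + 2*ε*ξ*(1-3*wm)))*t^2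
            + (3/2*(ε*(1-6*ξ)*(1-wm) + 2*ε*ξ*(1-3*wm)))*t^3) :=
      funext fun t => by unfold f1 Bfun Dfun; ring
    rw [hfun, deriv_cubic]
    linear_combination -hD + (3/2)*hB0
  have e01 : deriv (fun t => f1 ε ξ wm z 0 t lstar) Y
      = -(18*ξ*(z lstar)*Y*(2*ξ*lstar*(z lstar)+1+wm)) := by
    have hfun : (fun t => f1 ε ξ wm z 0 t lstar)
        = (fun t => (9*ξ*(z lstar)*(-4/3 + 2*ε*ξ*(1-3*wm)*(z lstar)^2 + (1+wm)))
            + 0*t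
            + (ε/2*lstar*(1 - 6*ε*ξ*(1-6*ξ)*(z lstar)^2)
              - 9*ξ*(z lstar)*(2*ξ*lstar*(z lstar)+1+wm))*t^2
            + 0*t^3) :=
      funext fun t => by unfold f1 Bfun Dfun; ring
    rw [hfun, deriv_cubic]
    linear_combination ε*lstar*Y*hD
  have e10 : deriv (fun t => f2 ε ξ wm z t Y lstar) 0
      = 6*ε*ξ*(1-3*wm)*Y*(z lstar) := by
    have hfun : (fun t => f2 ε ξ wm z t Y lstar)
        = (fun t => (2*Y*(1 - 6*ε*ξ*(1-6*ξ)*(z lstar)^2)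
              + 3/2*Y*(-4/3 - 2*ξ*lstar*Y^2*(z lstar) + 2*ε*ξ*(1-3*wm)*(z lstar)^2
                + (1+wm)*(1-Y^2)))
            + (-(Y*lstar/2)*(1 - 6*ε*ξ*(1-6*ξ)*(z lstar)^2)
              + 3/2*Y*(4*ε*ξ*(1-3*wm)*(z lstar)))*t
            + (3/2*Y*(ε*(1-6*ξ)*(1-wm) + 2*ε*ξ*(1-3*wm)))*t^2
            + 0*t^3) :=
      funext fun t => by unfold f2 Bfun Dfun; ring
    rw [hfun, deriv_cubic]
    linear_combination (-(Y*lstar/2))*hD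
  have e11 : deriv (fun t => f2 ε ξ wm z 0 t lstar) Y
      = -(36*ε*ξ^2*(1-3*wm)*(z lstar)^2) := by
    have hfun : (fun t => f2 ε ξ wm z 0 t lstar)
        = (fun t => (0:ℝ)
            + (2*(1 - 6*ε*ξ*(1-6*ξ)*(z lstar)^2)
              + 3/2*(-4/3 + 2*ε*ξ*(1-3*wm)*(z lstar)^2 + (1+wm)))*t
            + 0*t^2
            + (-(3/2)*(2*ξ*lstar*(z lstar)+1+wm))*t^3) :=
      funext fun t => by unfold f2 Bfun Dfun; ring
    rw [hfun, deriv_cubic]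
    have hE : (1-6*ξ)*((2*(1 - 6*ε*ξ*(1-6*ξ)*(z lstar)^2)
        + 3/2*(-4/3 + 2*ε*ξ*(1-3*wm)*(z lstar)^2 + (1+wm)))
        + 2*0*Y + 3*(-(3/2)*(2*ξ*lstar*(z lstar)+1+wm))*Y^2
        + 36*ε*ξ^2*(1-3*wm)*(z lstar)^2) = 0 := by
      linear_combination 2*(1-6*ξ)*hD + (3/2)*(1-6*ξ)*hB0 - 3*hy' + 6*ξ*(1-3*wm)*hZ
    have := (mul_eq_zero.mp hE).resolve_left h16
    linarith
  have e20 : deriv (fun t => f3 ε ξ z t Y lstar) 0 = 0 := by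
    have hfun : (fun t => f3 ε ξ z t Y lstar)
        = (fun t => (0:ℝ)
            + ((1 - 6*ε*ξ*(1-6*ξ)*(z lstar)^2)/deriv z lstar)*t + 0*t^2 + 0*t^3) :=
      funext fun t => by unfold f3 Dfun; ring
    rw [hfun, deriv_cubic, hD]
    norm_num
  have e21 : deriv (fun t => f3 ε ξ z 0 t lstar) Y = 0 := by
    have hfun : (fun t => f3 ε ξ z 0 t lstar) = (fun _ : ℝ => (0:ℝ)) :=
      funext fun t => by unfold f3; simp
    rw [hfun, deriv_const]
  have e22 : deriv (fun t => f3 ε ξ z 0 Y t) lstar = 0 := by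
    have hfun : (fun t => f3 ε ξ z 0 Y t) = (fun _ : ℝ => (0:ℝ)) :=
      funext fun t => by unfold f3; simp
    rw [hfun, deriv_const]
  have hJ : Jmat ε ξ wm z 0 Y lstar
      = Matrix.of ![![36*ε*ξ^2*(1-3*wm)*(z lstar)^2,
            -(18*ξ*(z lstar)*Y*(2*ξ*lstar*(z lstar)+1+wm)),
            deriv (fun t => f1 ε ξ wm z 0 Y t) lstar],
          ![6*ε*ξ*(1-3*wm)*Y*(z lstar),
            -(36*ε*ξ^2*(1-3*wm)*(z lstar)^2),
            deriv (fun t => f2 ε ξ wm z 0 Y t) lstar],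
          ![(0:ℝ),0,0]] := by
    unfold Jmat
    rw [e00, e01, e10, e11, e20, e21, e22]
  have hfin : (36*ε*ξ^2*(1-3*wm)*(z lstar)^2) * (36*ε*ξ^2*(1-3*wm)*(z lstar)^2)
      + (-(18*ξ*(z lstar)*Y*(2*ξ*lstar*(z lstar)+1+wm)))
        * (6*ε*ξ*(1-3*wm)*Y*(z lstar)) = 0 := by
    have hP : (1-6*ξ)^2 * ((36*ε*ξ^2*(1-3*wm)*(z lstar)^2)
        * (36*ε*ξ^2*(1-3*wm)*(z lstar)^2)
        + (-(18*ξ*(z lstar)*Y*(2*ξ*lstar*(z lstar)+1+wm)))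
          * (6*ε*ξ*(1-3*wm)*Y*(z lstar))) = 0 := by
      linear_combination (36*ξ^2*(1-3*wm)^2*(6*ε*ξ*(1-6*ξ)*(z lstar)^2))*hZ
        + (-(18*ξ*(1-3*wm)*(6*ε*ξ*(1-6*ξ)*(z lstar)^2)))*hy'
    have h162 : ((1-6*ξ)^2 : ℝ) ≠ 0 := pow_ne_zero 2 h16
    have := (mul_eq_zero.mp hP).resolve_left h162
    linarith
  rw [hJ]
  exact nilp3 _ _ _ _ _ hfin
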